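/- If f : ℝ → ℝ is continuous, 2π-periodic, and its Fourier series converges uniformly, then the Fourier series converges to f. -/

import Mathlib

open intervalIntegral Real

namespace FourierThm

section Helpers
open MeasureTheory Filter Set AddCircle

private lemma intC (k : ℤ) (hk : k ≠ 0) :
    ∫ x in (0:ℝ)..(2*π), Real.cos ((k:ℝ) * x) = 0 := by
  have hk' : (k:ℝ) ≠ 0 := Int.cast_ne_zero.mpr hk
  rw [intervalIntegral.integral_comp_mul_left Real.cos hk']
  rw [mul_zero, integral_cos, Real.sin_zero,
    show (k:ℝ) * (2*π) = ((2*k : ℤ):ℝ) * π by push_cast; ring, Real.sin_int_mul_pi]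
  simp

private lemma intS (k : ℤ) : ∫ x in (0:ℝ)..(2*π), Real.sin ((k:ℝ) * x) = 0 := by
  rcases eq_or_ne k 0 with rfl | hk
  · simp
  have hk' : (k:ℝ) ≠ 0 := Int.cast_ne_zero.mpr hk
  rw [intervalIntegral.integral_comp_mul_left Real.sin hk']
  rw [mul_zero, integral_sin, Real.cos_zero, Real.cos_int_mul_two_pi]
  simp

private lemma cc_gen (n m : ℕ) :
    ∫ x in (0:ℝ)..(2*π), Real.cos ((n:ℝ)*x) * Real.cos ((m:ℝ)*x)
      = ((∫ x in (0:ℝ)..(2*π), Real.cos ((((n:ℤ) - m : ℤ):ℝ) * x))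
        + ∫ x in (0:ℝ)..(2*π), Real.cos ((((n:ℤ) + m : ℤ):ℝ) * x)) / 2 := by
  rw [← intervalIntegral.integral_add
      ((by fun_prop : Continuous fun x : ℝ =>
        Real.cos ((((n:ℤ) - m : ℤ):ℝ) * x)).intervalIntegrable _ _)
      ((by fun_prop : Continuous fun x : ℝ =>
        Real.cos ((((n:ℤ) + m : ℤ):ℝ) * x)).intervalIntegrable _ _),
    ← intervalIntegral.integral_div]
  apply intervalIntegral.integral_congr
  intro x _
  push_cast
  rw [sub_mul, add_mul, Real.cos_sub, Real.cos_add]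
  ring

private lemma ss_gen (n m : ℕ) :
    ∫ x in (0:ℝ)..(2*π), Real.sin ((n:ℝ)*x) * Real.sin ((m:ℝ)*x)
      = ((∫ x in (0:ℝ)..(2*π), Real.cos ((((n:ℤ) - m : ℤ):ℝ) * x))
        - ∫ x in (0:ℝ)..(2*π), Real.cos ((((n:ℤ) + m : ℤ):ℝ) * x)) / 2 := by
  rw [← intervalIntegral.integral_sub
      ((by fun_prop : Continuous fun x : ℝ =>
        Real.cos ((((n:ℤ) - m : ℤ):ℝ) * x)).intervalIntegrable _ _)
      ((by fun_prop : Continuous fun x : ℝ =>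
        Real.cos ((((n:ℤ) + m : ℤ):ℝ) * x)).intervalIntegrable _ _),
    ← intervalIntegral.integral_div]
  apply intervalIntegral.integral_congr
  intro x _
  push_cast
  rw [sub_mul, add_mul, Real.cos_sub, Real.cos_add]
  ring

private lemma sc (n m : ℕ) :
    ∫ x in (0:ℝ)..(2*π), Real.sin ((n:ℝ)*x) * Real.cos ((m:ℝ)*x) = 0 := by
  have : ∫ x in (0:ℝ)..(2*π), Real.sin ((n:ℝ)*x) * Real.cos ((m:ℝ)*x)
      = ((∫ x in (0:ℝ)..(2*π), Real.sin ((((n:ℤ) + m : ℤ):ℝ) * x))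
        + ∫ x in (0:ℝ)..(2*π), Real.sin ((((n:ℤ) - m : ℤ):ℝ) * x)) / 2 := by
    rw [← intervalIntegral.integral_add
        ((by fun_prop : Continuous fun x : ℝ =>
          Real.sin ((((n:ℤ) + m : ℤ):ℝ) * x)).intervalIntegrable _ _)
        ((by fun_prop : Continuous fun x : ℝ =>
          Real.sin ((((n:ℤ) - m : ℤ):ℝ) * x)).intervalIntegrable _ _),
      ← intervalIntegral.integral_div]
    apply intervalIntegral.integral_congr
    intro x _
    push_cast
    rw [sub_mul, add_mul, Real.sin_sub, Real.sin_add]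
    ring
  rw [this, intS, intS]
  norm_num

private lemma cc (n m : ℕ) (h : n ≠ m) :
    ∫ x in (0:ℝ)..(2*π), Real.cos ((n:ℝ)*x) * Real.cos ((m:ℝ)*x) = 0 := by
  rw [cc_gen, intC _ (by omega), intC _ (by omega)]
  norm_num

private lemma cc_self (n : ℕ) (hn : n ≠ 0) :
    ∫ x in (0:ℝ)..(2*π), Real.cos ((n:ℝ)*x) * Real.cos ((n:ℝ)*x) = π := by
  have h1 : ∫ x in (0:ℝ)..(2*π), Real.cos ((((n:ℤ) - n : ℤ):ℝ) * x) = 2 * π := by simp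
  rw [cc_gen, h1, intC ((n:ℤ) + n) (by omega)]
  ring

private lemma ss (n m : ℕ) (h : n ≠ m) :
    ∫ x in (0:ℝ)..(2*π), Real.sin ((n:ℝ)*x) * Real.sin ((m:ℝ)*x) = 0 := by
  rw [ss_gen, intC _ (by omega), intC _ (by omega)]
  norm_num

private lemma ss_self (n : ℕ) (hn : n ≠ 0) :
    ∫ x in (0:ℝ)..(2*π), Real.sin ((n:ℝ)*x) * Real.sin ((n:ℝ)*x) = π := by
  have h1 : ∫ x in (0:ℝ)..(2*π), Real.cos ((((n:ℤ) - n : ℤ):ℝ) * x) = 2 * π := by simp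
  rw [ss_gen, h1, intC ((n:ℤ) + n) (by omega)]
  ring

private lemma intCn (m : ℕ) (hm : m ≠ 0) :
    ∫ x in (0:ℝ)..(2*π), Real.cos ((m:ℝ) * x) = 0 := by
  have := intC m (by exact_mod_cast hm)
  simpa using this

private lemma intSn (m : ℕ) : ∫ x in (0:ℝ)..(2*π), Real.sin ((m:ℝ) * x) = 0 := by
  simpa using intS m


private lemma main_aux (h : ℝ → ℝ) (hc : Continuous h)
    (hperh : Function.Periodic h (2*π))
    (hcosZ : ∀ k : ℤ, ∫ x in (0:ℝ)..(2*π), h x * Real.cos ((k:ℝ)*x) = 0)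
    (hsinZ : ∀ k : ℤ, ∫ x in (0:ℝ)..(2*π), h x * Real.sin ((k:ℝ)*x) = 0) :
    ∀ x, h x = 0 := by
  haveI : Fact (0 < 2*π) := ⟨by positivity⟩
  set H : AddCircle (2*π) → ℂ := AddCircle.liftIco (2*π) 0 (fun x => (h x : ℂ)) with hHdef
  have hend : ((h 0 : ℂ)) = ((h (2*π) : ℂ)) := by
    have := hperh 0
    rw [zero_add] at this
    rw [this]
  have hHcont : Continuous H :=
    AddCircle.liftIco_zero_continuous hend (Complex.continuous_ofReal.comp hc).continuousOn
  have hHx : ∀ x ∈ Set.Ico (0:ℝ) (2*π), H ↑x = (h x : ℂ) := by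
    intro x hx
    exact AddCircle.liftIco_zero_coe_apply hx
  -- Fourier coefficients of H vanish
  have hcoeff : ∀ n : ℤ, fourierCoeff H n = 0 := by
    intro n
    rw [fourierCoeff_eq_intervalIntegral H n 0]
    have : (∫ x in (0:ℝ)..(0 + 2*π), fourier (-n) (x : AddCircle (2*π)) • H ↑x) = 0 := by
      rw [zero_add]
      have hae : ∀ᵐ x ∂(volume : Measure ℝ), x ∈ Set.uIoc (0:ℝ) (2*π) →
          fourier (-n) (x : AddCircle (2*π)) • H ↑x
            = ((h x * Real.cos ((n:ℝ)*x) : ℝ) : ℂ)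
              + ((-(h x * Real.sin ((n:ℝ)*x)) : ℝ) : ℂ) * Complex.I := by
        filter_upwards [measure_eq_zero_iff_ae_notMem.mp
          (measure_singleton (2*π) : (volume : Measure ℝ) {2*π} = 0)] with x hx2 hx
        have hx' : x ∈ Set.Ico (0:ℝ) (2*π) := by
          rw [Set.uIoc_of_le (by positivity)] at hx
          exact ⟨hx.1.le, lt_of_le_of_ne hx.2 hx2⟩
        rw [smul_eq_mul, hHx x hx', fourier_coe_apply]
        have harg : 2 * (π:ℂ) * Complex.I * ((-n : ℤ) : ℂ) * (x:ℂ) / ((2 * π : ℝ) : ℂ)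
            = ((-((n:ℝ)*x) : ℝ) : ℂ) * Complex.I := by
          have hπ : (π:ℂ) ≠ 0 := Complex.ofReal_ne_zero.mpr Real.pi_ne_zero
          field_simp
          push_cast
          ring
        rw [harg, Complex.exp_mul_I, ← Complex.ofReal_cos, ← Complex.ofReal_sin,
          Real.cos_neg, Real.sin_neg]
        push_cast
        ring
      rw [intervalIntegral.integral_congr_ae hae]
      rw [intervalIntegral.integral_add
        ((by fun_prop : Continuous fun x : ℝ =>
          ((h x * Real.cos ((n:ℝ)*x) : ℝ) : ℂ)).intervalIntegrable _ _)
        ((by fun_prop : Continuous fun x : ℝ =>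
          ((-(h x * Real.sin ((n:ℝ)*x)) : ℝ) : ℂ) * Complex.I).intervalIntegrable _ _)]
      rw [intervalIntegral.integral_mul_const]
      rw [intervalIntegral.integral_ofReal, intervalIntegral.integral_ofReal]
      have e1 : (∫ x in (0:ℝ)..(2*π), h x * Real.cos ((n:ℝ)*x)) = 0 := hcosZ n
      have e2 : (∫ x in (0:ℝ)..(2*π), -(h x * Real.sin ((n:ℝ)*x))) = 0 := by
        rw [intervalIntegral.integral_neg, hsinZ n, neg_zero]
      rw [e1, e2]
      simp
    rw [this, smul_zero]
  -- pass to L²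
  set HC : C(AddCircle (2*π), ℂ) := ⟨H, hHcont⟩ with hHCdef
  have hint : ∫ t : AddCircle (2*π), ‖HC t‖^2 ∂haarAddCircle = 0 := by
    have hts := tsum_sq_fourierCoeff (ContinuousMap.toLp (E := ℂ) 2 haarAddCircle ℂ HC)
    have heq : ∫ t : AddCircle (2*π), ‖HC t‖^2 ∂haarAddCircle
        = ∫ t : AddCircle (2*π),
            ‖((ContinuousMap.toLp (E := ℂ) 2 haarAddCircle ℂ HC :
              Lp ℂ 2 haarAddCircle) : AddCircle (2*π) → ℂ) t‖^2 ∂haarAddCircle := by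
      apply MeasureTheory.integral_congr_ae
      filter_upwards [ContinuousMap.coeFn_toLp (p := 2) haarAddCircle (𝕜 := ℂ) HC] with t ht
      rw [ht]
    rw [heq, ← hts]
    have hterm : ∀ i : ℤ, ‖fourierCoeff
        ((ContinuousMap.toLp (E := ℂ) 2 haarAddCircle ℂ HC : Lp ℂ 2 haarAddCircle) :
          AddCircle (2*π) → ℂ) i‖^2 = 0 := by
      intro i
      rw [fourierCoeff_toLp]
      have : fourierCoeff (HC : AddCircle (2*π) → ℂ) i = 0 := hcoeff i
      rw [this]
      simp
    simp only [hterm]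
    exact tsum_zero
  have hzero : ∀ t : AddCircle (2*π), HC t = 0 := by
    have hnn : 0 ≤ᵐ[haarAddCircle (T := 2*π)] fun t => ‖HC t‖^2 :=
      Filter.Eventually.of_forall (fun t => by positivity)
    have hintg : Integrable (fun t => ‖HC t‖^2) (haarAddCircle (T := 2*π)) := by
      apply Continuous.integrable_of_hasCompactSupport
      · fun_prop
      · exact HasCompactSupport.of_compactSpace _
    have hae0 := (integral_eq_zero_iff_of_nonneg_ae hnn hintg).mp hint
    have : (fun t => ‖HC t‖^2) = fun _ => (0:ℝ) := by
      rw [← Continuous.ae_eq_iff_eq (μ := haarAddCircle) (by fun_prop) continuous_const]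
      exact hae0
    intro t
    have ht := congrFun this t
    have : ‖HC t‖ = 0 := by nlinarith [norm_nonneg (HC t)]
    exact norm_eq_zero.mp this
  -- back to h on [0, 2π)
  have hIco : ∀ x ∈ Set.Ico (0:ℝ) (2*π), h x = 0 := by
    intro x hx
    have := hzero ↑x
    rw [show HC (↑x) = H ↑x from rfl, hHx x hx] at this
    exact_mod_cast this
  -- extend by periodicity
  intro x
  have h2π : (0:ℝ) < 2*π := by positivity
  set k : ℤ := ⌊x / (2*π)⌋ with hk
  have hxid : x = (x / (2*π)) * (2*π) := by field_simp
  have hy : x - k * (2*π) ∈ Set.Ico (0:ℝ) (2*π) := by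
    constructor
    · have h1 := Int.floor_le (x / (2*π))
      rw [hk]
      nlinarith [h1, h2π, hxid]
    · have h1 := Int.lt_floor_add_one (x / (2*π))
      rw [hk]
      nlinarith [h1, h2π, hxid]
  have := hIco _ hy
  rwa [hperh.sub_int_mul_eq k] at this

private lemma cs (n m : ℕ) :
    ∫ x in (0:ℝ)..(2*π), Real.cos ((n:ℝ)*x) * Real.sin ((m:ℝ)*x) = 0 := by
  rw [intervalIntegral.integral_congr (g := fun x =>
    Real.sin ((m:ℝ)*x) * Real.cos ((n:ℝ)*x)) (fun x _ => mul_comm _ _)]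
  exact sc m n


end Helpers

end FourierThm

open FourierThm

/-- If `f` is continuous and `2π`-periodic and its Fourier series converges
uniformly (to some function `g`), then the Fourier series converges to `f`. -/
theorem fourier_uniform_limit_eq (f : ℝ → ℝ) (hf : Continuous f)
    (hper : Function.Periodic f (2 * π))
    (a : ℕ → ℝ) (b : ℕ → ℝ)
    (ha : ∀ n : ℕ, a n = (1 / π) * ∫ x in (0:ℝ)..(2 * π), f x * Real.cos (n * x))
    (hb : ∀ n : ℕ, b n = (1 / π) * ∫ x in (0:ℝ)..(2 * π), f x * Real.sin (n * x))
    (S : ℕ → ℝ → ℝ)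
    (hS : ∀ (N : ℕ) (x : ℝ), S N x =
      a 0 / 2 + ∑ n ∈ Finset.Icc 1 N, (a n * Real.cos (n * x) + b n * Real.sin (n * x)))
    (g : ℝ → ℝ) (hunif : TendstoUniformly S g Filter.atTop) :
    g = f := by
  classical
  have hπ : (0:ℝ) < π := Real.pi_pos
  have hScont : ∀ N, Continuous (S N) := by
    intro N
    have hSN : S N = fun x => a 0 / 2 + ∑ n ∈ Finset.Icc 1 N,
        (a n * Real.cos (n * x) + b n * Real.sin (n * x)) := funext fun x => hS N x
    rw [hSN]
    apply Continuous.add continuous_const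
    apply continuous_finset_sum
    intro n _
    fun_prop
  have hgcont : Continuous g := hunif.continuous (Filter.Eventually.of_forall hScont).frequently
  -- passing to the limit in integrals against a bounded weight
  have tends : ∀ w : ℝ → ℝ, Continuous w → (∀ x, |w x| ≤ 1) →
      Filter.Tendsto (fun N => ∫ x in (0:ℝ)..(2*π), S N x * w x) Filter.atTop
        (nhds (∫ x in (0:ℝ)..(2*π), g x * w x)) := by
    intro w hw hwb
    refine Metric.tendsto_nhds.mpr fun ε hε => ?_
    have hδ : 0 < ε / (4*π+1) := by positivity
    filter_upwards [Metric.tendstoUniformly_iff.mp hunif (ε/(4*π+1)) hδ] with N hN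
    rw [Real.dist_eq, ← intervalIntegral.integral_sub
      ((show Continuous fun x => S N x * w x from (hScont N).mul hw).intervalIntegrable _ _) ((show Continuous fun x => g x * w x from hgcont.mul hw).intervalIntegrable _ _)]
    have hb2 : ∀ x ∈ Set.uIoc (0:ℝ) (2*π), ‖S N x * w x - g x * w x‖ ≤ ε/(4*π+1) := by
      intro x _
      rw [show S N x * w x - g x * w x = (S N x - g x) * w x by ring,
        Real.norm_eq_abs, abs_mul]
      have h1 : |S N x - g x| ≤ ε/(4*π+1) := by
        have := hN x
        rw [Real.dist_eq, abs_sub_comm] at this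
        exact this.le
      calc |S N x - g x| * |w x| ≤ (ε/(4*π+1)) * 1 :=
            mul_le_mul h1 (hwb x) (abs_nonneg _) hδ.le
        _ = ε/(4*π+1) := mul_one _
    calc ‖∫ x in (0:ℝ)..(2*π), (S N x * w x - g x * w x)‖
        ≤ ε/(4*π+1) * |2*π - 0| :=
          intervalIntegral.norm_integral_le_of_norm_le_const hb2
      _ < ε := by
          rw [sub_zero, abs_of_pos (by positivity)]
          rw [div_mul_eq_mul_div, div_lt_iff₀ (by positivity)]
          nlinarith [hπ, hε]
  -- expansion of the partial-sum integrals
  have expand : ∀ (u : ℝ → ℝ), Continuous u → ∀ N : ℕ,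
      ∫ x in (0:ℝ)..(2*π), S N x * u x
        = (a 0 / 2) * (∫ x in (0:ℝ)..(2*π), u x)
          + ∑ n ∈ Finset.Icc 1 N,
            (a n * (∫ x in (0:ℝ)..(2*π), Real.cos ((n:ℝ)*x) * u x)
             + b n * (∫ x in (0:ℝ)..(2*π), Real.sin ((n:ℝ)*x) * u x)) := by
    intro u hu N
    have step1 : ∫ x in (0:ℝ)..(2*π), S N x * u x
        = ∫ x in (0:ℝ)..(2*π), ((a 0 / 2) * u x
            + ∑ n ∈ Finset.Icc 1 N,
              (a n * (Real.cos ((n:ℝ)*x) * u x) + b n * (Real.sin ((n:ℝ)*x) * u x))) := by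
      apply intervalIntegral.integral_congr
      intro x _
      dsimp only
      rw [hS, add_mul, Finset.sum_mul]
      congr 1
      exact Finset.sum_congr rfl fun n _ => by ring
    rw [step1]
    rw [intervalIntegral.integral_add ((show Continuous fun x => a 0 / 2 * u x from continuous_const.mul hu).intervalIntegrable _ _)
      ((continuous_finset_sum _ fun n _ => by fun_prop : Continuous fun x => ∑ n ∈ Finset.Icc 1 N,
                (a n * (Real.cos ((n:ℝ)*x) * u x) + b n * (Real.sin ((n:ℝ)*x) * u x))).intervalIntegrable _ _)]
    rw [intervalIntegral.integral_const_mul]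
    congr 1
    rw [intervalIntegral.integral_finset_sum (fun n _ => ((by fun_prop :
        Continuous fun x => a n * (Real.cos ((n:ℝ)*x) * u x)
          + b n * (Real.sin ((n:ℝ)*x) * u x)).intervalIntegrable _ _))]
    apply Finset.sum_congr rfl
    intro n _
    rw [intervalIntegral.integral_add
      ((by fun_prop : Continuous fun x =>
        a n * (Real.cos ((n:ℝ)*x) * u x)).intervalIntegrable _ _)
      ((by fun_prop : Continuous fun x =>
        b n * (Real.sin ((n:ℝ)*x) * u x)).intervalIntegrable _ _),
      intervalIntegral.integral_const_mul, intervalIntegral.integral_const_mul]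
  have key_cos : ∀ m N : ℕ, m ≤ N →
      ∫ x in (0:ℝ)..(2*π), S N x * Real.cos ((m:ℝ)*x) = π * a m := by
    intro m N hmN
    rw [expand _ (by fun_prop) N]
    rcases Nat.eq_zero_or_pos m with rfl | hm
    · have e0 : ∫ x in (0:ℝ)..(2*π), Real.cos (((0:ℕ):ℝ)*x) = 2*π := by
        simp
      rw [e0, Finset.sum_eq_zero]
      · ring
      · intro n hn
        rw [cc n 0 (by simp only [Finset.mem_Icc] at hn; omega), sc n 0]
        ring
    · rw [intCn m (by omega)]
      rw [Finset.sum_eq_single_of_mem m (Finset.mem_Icc.mpr ⟨hm, hmN⟩)]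
      · rw [cc_self m (by omega), sc m m]
        ring
      · intro n _ hne
        rw [cc n m hne, sc n m]
        ring
  have key_sin : ∀ m N : ℕ, 1 ≤ m → m ≤ N →
      ∫ x in (0:ℝ)..(2*π), S N x * Real.sin ((m:ℝ)*x) = π * b m := by
    intro m N hm hmN
    rw [expand _ (by fun_prop) N, intSn m]
    rw [Finset.sum_eq_single_of_mem m (Finset.mem_Icc.mpr ⟨hm, hmN⟩)]
    · rw [ss_self m (by omega), cs m m]
      ring
    · intro n _ hne
      rw [cs n m, ss n m hne]
      ring
  -- the Fourier coefficients of g agree with those of f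
  have A_cos : ∀ m : ℕ, ∫ x in (0:ℝ)..(2*π), g x * Real.cos ((m:ℝ)*x)
      = ∫ x in (0:ℝ)..(2*π), f x * Real.cos ((m:ℝ)*x) := by
    intro m
    have h1 := tends (fun x => Real.cos ((m:ℝ)*x)) (by fun_prop)
      (fun x => Real.abs_cos_le_one _)
    have h2 : Filter.Tendsto (fun N => ∫ x in (0:ℝ)..(2*π), S N x * Real.cos ((m:ℝ)*x))
        Filter.atTop (nhds (π * a m)) := by
      refine Filter.Tendsto.congr' ?_ tendsto_const_nhds
      filter_upwards [Filter.eventually_ge_atTop m] with N hN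
      exact (key_cos m N hN).symm
    have h3 := tendsto_nhds_unique h1 h2
    rw [h3, ha m, ← mul_assoc, mul_one_div, div_self hπ.ne', one_mul]
  have A_sin : ∀ m : ℕ, 1 ≤ m → ∫ x in (0:ℝ)..(2*π), g x * Real.sin ((m:ℝ)*x)
      = ∫ x in (0:ℝ)..(2*π), f x * Real.sin ((m:ℝ)*x) := by
    intro m hm
    have h1 := tends (fun x => Real.sin ((m:ℝ)*x)) (by fun_prop)
      (fun x => Real.abs_sin_le_one _)
    have h2 : Filter.Tendsto (fun N => ∫ x in (0:ℝ)..(2*π), S N x * Real.sin ((m:ℝ)*x))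
        Filter.atTop (nhds (π * b m)) := by
      refine Filter.Tendsto.congr' ?_ tendsto_const_nhds
      filter_upwards [Filter.eventually_ge_atTop m] with N hN
      exact (key_sin m N hm hN).symm
    have h3 := tendsto_nhds_unique h1 h2
    rw [h3, hb m, ← mul_assoc, mul_one_div, div_self hπ.ne', one_mul]
  -- g is periodic
  have hgper : Function.Periodic g (2*π) := by
    intro x
    have hsper : ∀ N, S N (x + 2*π) = S N x := by
      intro N
      rw [hS, hS]
      congr 1
      apply Finset.sum_congr rfl
      intro n _
      rw [show (n:ℝ) * (x + 2*π) = (n:ℝ)*x + (n:ℕ) * (2*π) by push_cast; ring,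
        Real.cos_add_nat_mul_two_pi, Real.sin_add_nat_mul_two_pi]
    have t1 := hunif.tendsto_at (x + 2*π)
    have t2 := hunif.tendsto_at x
    rw [show (fun N => S N (x+2*π)) = fun N => S N x from funext hsper] at t1
    exact tendsto_nhds_unique t1 t2
  -- the difference has vanishing Fourier coefficients
  have hnatC : ∀ m : ℕ, ∫ x in (0:ℝ)..(2*π), (f x - g x) * Real.cos ((m:ℝ)*x) = 0 := by
    intro m
    rw [intervalIntegral.integral_congr (g := fun x => f x * Real.cos ((m:ℝ)*x)
      - g x * Real.cos ((m:ℝ)*x)) (fun x _ => by ring)]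
    rw [intervalIntegral.integral_sub ((show Continuous fun x => f x * Real.cos ((m:ℝ)*x) from hf.mul (by fun_prop : Continuous fun x => Real.cos ((m:ℝ)*x))).intervalIntegrable _ _)
      ((show Continuous fun x => g x * Real.cos ((m:ℝ)*x) from hgcont.mul (by fun_prop : Continuous fun x => Real.cos ((m:ℝ)*x))).intervalIntegrable _ _), A_cos m, sub_self]
  have hnatS : ∀ m : ℕ, ∫ x in (0:ℝ)..(2*π), (f x - g x) * Real.sin ((m:ℝ)*x) = 0 := by
    intro m
    rcases Nat.eq_zero_or_pos m with rfl | hm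
    · simp
    rw [intervalIntegral.integral_congr (g := fun x => f x * Real.sin ((m:ℝ)*x)
      - g x * Real.sin ((m:ℝ)*x)) (fun x _ => by ring)]
    rw [intervalIntegral.integral_sub ((show Continuous fun x => f x * Real.sin ((m:ℝ)*x) from hf.mul (by fun_prop : Continuous fun x => Real.sin ((m:ℝ)*x))).intervalIntegrable _ _)
      ((show Continuous fun x => g x * Real.sin ((m:ℝ)*x) from hgcont.mul (by fun_prop : Continuous fun x => Real.sin ((m:ℝ)*x))).intervalIntegrable _ _), A_sin m hm, sub_self]
  have hcosZ : ∀ k : ℤ, ∫ x in (0:ℝ)..(2*π), (f x - g x) * Real.cos ((k:ℝ)*x) = 0 := by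
    intro k
    rcases le_or_gt 0 k with hk | hk
    · obtain ⟨m, rfl⟩ := Int.eq_ofNat_of_zero_le hk
      have := hnatC m
      rw [intervalIntegral.integral_congr (g := fun x => (f x - g x)
        * Real.cos ((m:ℝ)*x)) (fun x _ => by push_cast; ring_nf)]
      exact this
    · have hm : (((-k).toNat : ℕ) : ℝ) = -(k:ℝ) := by
        have h' : (((-k).toNat : ℕ) : ℤ) = -k := Int.toNat_of_nonneg (by omega)
        exact_mod_cast h'
      have := hnatC (-k).toNat
      rw [intervalIntegral.integral_congr (g := fun x => (f x - g x)
        * Real.cos ((((-k).toNat : ℕ):ℝ)*x)) (fun x _ => by dsimp only; rw [hm, neg_mul, Real.cos_neg])]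
      exact this
  have hsinZ : ∀ k : ℤ, ∫ x in (0:ℝ)..(2*π), (f x - g x) * Real.sin ((k:ℝ)*x) = 0 := by
    intro k
    rcases le_or_gt 0 k with hk | hk
    · obtain ⟨m, rfl⟩ := Int.eq_ofNat_of_zero_le hk
      have := hnatS m
      rw [intervalIntegral.integral_congr (g := fun x => (f x - g x)
        * Real.sin ((m:ℝ)*x)) (fun x _ => by push_cast; ring_nf)]
      exact this
    · have hm : (((-k).toNat : ℕ) : ℝ) = -(k:ℝ) := by
        have h' : (((-k).toNat : ℕ) : ℤ) = -k := Int.toNat_of_nonneg (by omega)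
        exact_mod_cast h'
      have := hnatS (-k).toNat
      rw [intervalIntegral.integral_congr (g := fun x => -((f x - g x)
        * Real.sin ((((-k).toNat : ℕ):ℝ)*x))) (fun x _ => by dsimp only; rw [hm, neg_mul, Real.sin_neg]; ring)]
      rw [intervalIntegral.integral_neg, this, neg_zero]
  have hall := main_aux (fun x => f x - g x) (hf.sub hgcont)
    (fun x => by simp [hper x, hgper x]) hcosZ hsinZ
  funext x
  have := hall x
  linarith
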